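/- In an additive [17,4,12]_4 code, no codeline degenerates to a point and no two codelines intersect: the 17 codelines form a partial spread of lines in PG(7,2). -/

import Mathlib

open Module LinearMap Finset

/-- The quaternary weight of a word in `(𝔽₂²)ⁿ`. -/
noncomputable def qWt {n : ℕ} (x : Fin n → ZMod 2 × ZMod 2) : ℕ := {i | x i ≠ 0}.ncard

/-- The `i`-th codeline of an additive code `C`, living in the binary dual space
of `C` (this is the span of the two columns of a generator matrix of `C`
belonging to coordinate `i`): the range of the dual of the evaluation map
`C → 𝔽₂²` at coordinate `i`. -/
noncomputable def codeline {n : ℕ} (C : Submodule (ZMod 2) (Fin n → ZMod 2 × ZMod 2))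
    (i : Fin n) : Submodule (ZMod 2) (Module.Dual (ZMod 2) C) :=
  LinearMap.range (((LinearMap.proj i).comp C.subtype).dualMap)

lemma qWt_eq {n : ℕ} (x : Fin n → ZMod 2 × ZMod 2) :
    qWt x = ∑ k, if x k ≠ 0 then 1 else 0 := by
  classical
  rw [qWt, Set.ncard_eq_toFinset_card']
  simp [Finset.card_filter, Set.toFinset_setOf]

set_option synthInstance.maxHeartbeats 1000000 in
set_option maxHeartbeats 2000000 in
lemma key (C : Submodule (ZMod 2) (Fin 17 → ZMod 2 × ZMod 2))
    (hd : ∀ x ∈ C, x ≠ 0 → 12 ≤ qWt x)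
    (D : Submodule (ZMod 2) (Fin 17 → ZMod 2 × ZMod 2)) (hDC : D ≤ C)
    {i j : Fin 17} (hij : i ≠ j)
    (hzi : ∀ x ∈ D, x i = 0) (hzj : ∀ x ∈ D, x j = 0)
    (hdim5 : 5 ≤ Module.finrank (ZMod 2) D) : False := by
  classical
  haveI : Fintype D := Fintype.ofFinite D
  set d := Module.finrank (ZMod 2) D with hd'
  have hcard : Fintype.card D = 2 ^ d := by
    have := card_eq_pow_finrank (K := ZMod 2) (V := D)
    simpa [ZMod.card] using this
  set m : ℕ := 2 ^ (d - 2) with hm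
  have h4m : 2 ^ d = 4 * m := by
    have : d = (d - 2) + 2 := by omega
    rw [this, pow_add, hm]; ring
  have hm8 : 8 ≤ m := by
    calc (8:ℕ) = 2 ^ 3 := rfl
    _ ≤ 2 ^ (d - 2) := Nat.pow_le_pow_right (by norm_num) (by omega)
  -- the total weight
  set S : ℕ := ∑ x : D, qWt (x : Fin 17 → ZMod 2 × ZMod 2) with hS
  -- lower bound
  have hlow : 12 * (2 ^ d - 1) ≤ S := by
    have h1 : ((Finset.univ.erase (0 : D)).card) • 12 ≤
        ∑ x ∈ Finset.univ.erase (0 : D), qWt (x : Fin 17 → ZMod 2 × ZMod 2) := by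
      apply Finset.card_nsmul_le_sum
      intro x hx
      have hx0 : x ≠ 0 := (Finset.mem_erase.mp hx).1
      exact hd x (hDC x.2) (by simpa using hx0)
    have h2 : ∑ x ∈ Finset.univ.erase (0 : D), qWt (x : Fin 17 → ZMod 2 × ZMod 2) ≤ S :=
      Finset.sum_le_sum_of_subset (Finset.subset_univ _)
    have h3 : (Finset.univ.erase (0 : D)).card = 2 ^ d - 1 := by
      rw [Finset.card_erase_of_mem (Finset.mem_univ _), Finset.card_univ, hcard]
    calc 12 * (2 ^ d - 1) = ((2:ℕ) ^ d - 1) • 12 := by rw [smul_eq_mul]; ring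
    _ ≤ S := by rw [← h3]; exact le_trans h1 h2
  -- counts per coordinate
  set c : Fin 17 → ℕ := fun k => ∑ x : D, if (x : Fin 17 → ZMod 2 × ZMod 2) k ≠ 0 then 1 else 0
    with hc
  have hSc : S = ∑ k, c k := by
    rw [hS]
    simp_rw [qWt_eq]
    rw [Finset.sum_comm]
  have hck : ∀ k, c k ≤ 2 ^ d - m := by
    intro k
    set f : D →ₗ[ZMod 2] ZMod 2 × ZMod 2 := (LinearMap.proj k).comp D.subtype with hf
    haveI : Fintype (LinearMap.ker f) := Fintype.ofFinite _
    have hker : m ≤ Fintype.card (LinearMap.ker f) := by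
      have h1 : Fintype.card (LinearMap.ker f)
          = 2 ^ Module.finrank (ZMod 2) (LinearMap.ker f) := by
        have := card_eq_pow_finrank (K := ZMod 2) (V := LinearMap.ker f)
        simpa [ZMod.card] using this
      have h2 : Module.finrank (ZMod 2) (LinearMap.range f)
          + Module.finrank (ZMod 2) (LinearMap.ker f) = d :=
        LinearMap.finrank_range_add_finrank_ker f
      have h3 : Module.finrank (ZMod 2) (LinearMap.range f) ≤ 2 := by
        have := Submodule.finrank_le (LinearMap.range f)
        simpa [Module.finrank_prod] using this
      rw [h1, hm]
      exact Nat.pow_le_pow_right (by norm_num) (by omega)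
    have hkerfilter : (Finset.univ.filter
        (fun x : D => (x : Fin 17 → ZMod 2 × ZMod 2) k = 0)).card
        = Fintype.card (LinearMap.ker f) := by
      rw [← Fintype.card_subtype]
      exact Fintype.card_congr (Equiv.subtypeEquivRight (fun x => by
        simp [hf, LinearMap.mem_ker])) |>.symm
    have hcc : c k = (Finset.univ.filter
        (fun x : D => ¬ (x : Fin 17 → ZMod 2 × ZMod 2) k = 0)).card := by
      rw [hc, Finset.card_filter]
    have hsplit := Finset.card_filter_add_card_filter_not
      (s := (Finset.univ : Finset D))
      (p := fun x : D => (x : Fin 17 → ZMod 2 × ZMod 2) k = 0)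
    rw [Finset.card_univ, hcard, hkerfilter] at hsplit
    omega
  have hci : c i = 0 := by
    rw [hc]
    apply Finset.sum_eq_zero
    intro x _
    simp [hzi x x.2]
  have hcj : c j = 0 := by
    rw [hc]
    apply Finset.sum_eq_zero
    intro x _
    simp [hzj x x.2]
  -- upper bound
  have hup : S ≤ 15 * (2 ^ d - m) := by
    set s : Finset (Fin 17) := (Finset.univ.erase i).erase j with hs
    have hscard : s.card = 15 := by
      rw [hs, Finset.card_erase_of_mem (Finset.mem_erase.mpr ⟨hij.symm, Finset.mem_univ _⟩),
        Finset.card_erase_of_mem (Finset.mem_univ _)]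
      simp
    have hsum : ∑ k, c k = ∑ k ∈ s, c k := by
      refine (Finset.sum_subset (Finset.subset_univ s) ?_).symm
      intro k _ hk
      rw [hs] at hk
      simp only [Finset.mem_erase, Finset.mem_univ, and_true, not_and, not_not] at hk
      by_cases hkj : k = j
      · rw [hkj]; exact hcj
      · rw [hk hkj]; exact hci
    have := Finset.sum_le_card_nsmul s c (2 ^ d - m) (fun k _ => hck k)
    rw [hscard] at this
    rw [hSc, hsum]
    simpa using this
  omega

set_option maxHeartbeats 2000000 in
set_option synthInstance.maxHeartbeats 1000000 in
/-- In an additive `[17,4,12]₄` code no codeline degenerates to a point and no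
two codelines intersect: the 17 codelines form a partial spread of lines in
`PG(7,2)`. -/
theorem codelines_form_partial_spread
    (C : Submodule (ZMod 2) (Fin 17 → ZMod 2 × ZMod 2))
    (hdim : Module.finrank (ZMod 2) C = 8)
    (hd : ∀ x ∈ C, x ≠ 0 → 12 ≤ qWt x) :
    (∀ i, Module.finrank (ZMod 2) (codeline C i) = 2) ∧
    (∀ i j, i ≠ j → codeline C i ⊓ codeline C j = ⊥) := by
  classical
  haveI : FiniteDimensional (ZMod 2) C := Module.Finite.of_finite
  set ev : Fin 17 → (C →ₗ[ZMod 2] ZMod 2 × ZMod 2) :=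
    fun k => (LinearMap.proj k).comp C.subtype with hev
  have hcl : ∀ k, codeline C k = LinearMap.range ((ev k).dualMap) := fun k => by
    unfold codeline; rw [hev]
  have hrk : ∀ k, Module.finrank (ZMod 2) (LinearMap.range (ev k))
      + Module.finrank (ZMod 2) (LinearMap.ker (ev k)) = 8 := fun k => by
    rw [← hdim]; exact LinearMap.finrank_range_add_finrank_ker _
  have hrle : ∀ k, Module.finrank (ZMod 2) (LinearMap.range (ev k)) ≤ 2 := fun k => by
    have := Submodule.finrank_le (LinearMap.range (ev k))
    simpa [Module.finrank_prod] using this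
  -- no doubly-vanishing subspace of dimension ≥ 5
  have hmain : ∀ i j : Fin 17, i ≠ j → ∀ P : Submodule (ZMod 2) C,
      P ≤ LinearMap.ker (ev i) → P ≤ LinearMap.ker (ev j) →
      Module.finrank (ZMod 2) P ≤ 4 := by
    intro i j hij P hPi hPj
    by_contra h
    refine key C hd (P.map C.subtype) (Submodule.map_subtype_le C P) hij ?_ ?_ ?_
    · rintro x ⟨y, hy, rfl⟩
      have h0 := LinearMap.mem_ker.mp (hPi hy)
      simpa [hev] using h0
    · rintro x ⟨y, hy, rfl⟩
      have h0 := LinearMap.mem_ker.mp (hPj hy)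
      simpa [hev] using h0
    · rw [Submodule.finrank_map_subtype_eq]; omega
  constructor
  · intro i
    have heq : Module.finrank (ZMod 2) (codeline C i)
        = Module.finrank (ZMod 2) (LinearMap.range (ev i)) := by
      rw [hcl i]; exact LinearMap.finrank_range_dualMap_eq_finrank_range (ev i)
    by_contra hne
    have h1 : Module.finrank (ZMod 2) (LinearMap.range (ev i)) ≤ 1 := by
      have := hrle i; omega
    obtain ⟨j, hj⟩ := exists_ne i
    have hsup := Submodule.finrank_sup_add_finrank_inf_eq
      (LinearMap.ker (ev i)) (LinearMap.ker (ev j))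
    have hsuple : Module.finrank (ZMod 2)
        ((LinearMap.ker (ev i) ⊔ LinearMap.ker (ev j) : Submodule (ZMod 2) C)) ≤ 8 := by
      rw [← hdim]; exact Submodule.finrank_le _
    have h5 : 5 ≤ Module.finrank (ZMod 2)
        ((LinearMap.ker (ev i) ⊓ LinearMap.ker (ev j) : Submodule (ZMod 2) C)) := by
      have := hrk i; have := hrk j; have := hrle j; omega
    have := hmain i j hj.symm (LinearMap.ker (ev i) ⊓ LinearMap.ker (ev j)) inf_le_left inf_le_right
    omega
  · intro i j hij
    by_contra h
    obtain ⟨φ, hφmem, hφ⟩ := (Submodule.ne_bot_iff _).mp h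
    rw [hcl i, hcl j] at hφmem
    have hmi : φ ∈ LinearMap.range ((ev i).dualMap) := (Submodule.mem_inf.mp hφmem).1
    have hmj : φ ∈ LinearMap.range ((ev j).dualMap) := (Submodule.mem_inf.mp hφmem).2
    obtain ⟨f, hf⟩ := hmi
    obtain ⟨g, hg⟩ := hmj
    have hsupne : LinearMap.ker (ev i) ⊔ LinearMap.ker (ev j) ≠ (⊤ : Submodule (ZMod 2) C) := by
      intro htop
      apply hφ
      apply LinearMap.ext
      intro x
      have hx : x ∈ (⊤ : Submodule (ZMod 2) C) := trivial
      rw [← htop] at hx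
      obtain ⟨y, hy, z, hz, rfl⟩ := Submodule.mem_sup.mp hx
      have hy0 : φ y = 0 := by
        rw [← hf, LinearMap.dualMap_apply, LinearMap.mem_ker.mp hy, map_zero]
      have hz0 : φ z = 0 := by
        rw [← hg, LinearMap.dualMap_apply, LinearMap.mem_ker.mp hz, map_zero]
      simp [map_add, hy0, hz0]
    have hlt : Module.finrank (ZMod 2)
        ((LinearMap.ker (ev i) ⊔ LinearMap.ker (ev j) : Submodule (ZMod 2) C)) < 8 := by
      rw [← hdim]; exact Submodule.finrank_lt hsupne
    have hsup := Submodule.finrank_sup_add_finrank_inf_eq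
      (LinearMap.ker (ev i)) (LinearMap.ker (ev j))
    have h5 : 5 ≤ Module.finrank (ZMod 2)
        ((LinearMap.ker (ev i) ⊓ LinearMap.ker (ev j) : Submodule (ZMod 2) C)) := by
      have := hrk i; have := hrk j; have := hrle i; have := hrle j; omega
    have := hmain i j hij (LinearMap.ker (ev i) ⊓ LinearMap.ker (ev j)) inf_le_left inf_le_right
    omega
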